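/- If F ∈ L¹(ℝ) ∩ C¹(ℝ) is real-valued, then the function G(y) = (1/12)·Im(k(y)∫_{-∞}^y conj(k)·F + conj(k(y))∫_y^∞ k·F), with k(y) = e^{2iy}(1 + (1/2)sech²(y/√2) + i√2 tanh(y/√2)), is bounded, of class C², and satisfies (-ℒ + 6)G = F, i.e. G'' + G - 3tanh²(y/√2)G + 6G = F. -/

import Mathlib

open MeasureTheory Complex

noncomputable def kJost (y : ℝ) : ℂ :=
  Complex.exp (2 * Complex.I * (y : ℂ))
    * (1 + (1 / 2) * (((Real.cosh (y / Real.sqrt 2))⁻¹ : ℝ) : ℂ) ^ 2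
        + Complex.I * ((Real.sqrt 2 : ℝ) : ℂ) * ((Real.tanh (y / Real.sqrt 2) : ℝ) : ℂ))

namespace Resolvent

noncomputable def c : ℝ := Real.sqrt 2

lemma c_pos : 0 < c := Real.sqrt_pos.mpr (by norm_num)
lemma c_ne : c ≠ 0 := ne_of_gt c_pos
lemma c_sq : c ^ 2 = 2 := Real.sq_sqrt (by norm_num)

noncomputable def S (y : ℝ) : ℝ := (Real.cosh (y / c))⁻¹
noncomputable def T (y : ℝ) : ℝ := Real.tanh (y / c)

lemma coshp (y : ℝ) : 0 < Real.cosh (y / c) := Real.cosh_pos _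

lemma ST (y : ℝ) : S y ^ 2 + T y ^ 2 = 1 := by
  have h := Real.cosh_sq_sub_sinh_sq (y / c)
  have hc := (coshp y).ne'
  simp only [S, T, Real.tanh_eq_sinh_div_cosh]
  field_simp
  linarith

lemma S_nonneg (y : ℝ) : 0 ≤ S y := inv_nonneg.mpr (coshp y).le

lemma S_le_one (y : ℝ) : S y ≤ 1 := by
  have h := Real.one_le_cosh (y / c)
  simpa [S] using inv_le_one_of_one_le₀ h

lemma hS (y : ℝ) : HasDerivAt S (-(S y * T y) / c) y := by
  have h1 : HasDerivAt (fun x : ℝ => x / c) (1 / c) y := by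
    simpa using (hasDerivAt_id y).div_const c
  have h2 : HasDerivAt (fun x : ℝ => Real.cosh (x / c)) (Real.sinh (y / c) * (1 / c)) y :=
    (Real.hasDerivAt_cosh (y / c)).comp (h := fun x : ℝ => x / c) y h1
  have h3 := h2.inv (coshp y).ne'
  refine h3.congr_deriv (Eq.symm ?_)
  have hc := (coshp y).ne'
  simp only [S, T, Real.tanh_eq_sinh_div_cosh]
  field_simp

lemma hT (y : ℝ) : HasDerivAt T (S y ^ 2 / c) y := by
  have h1 : HasDerivAt (fun x : ℝ => x / c) (1 / c) y := by
    simpa using (hasDerivAt_id y).div_const c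
  have hsinh : HasDerivAt (fun x : ℝ => Real.sinh (x / c)) (Real.cosh (y / c) * (1 / c)) y :=
    (Real.hasDerivAt_sinh (y / c)).comp (h := fun x : ℝ => x / c) y h1
  have hcosh : HasDerivAt (fun x : ℝ => Real.cosh (x / c)) (Real.sinh (y / c) * (1 / c)) y :=
    (Real.hasDerivAt_cosh (y / c)).comp (h := fun x : ℝ => x / c) y h1
  have h := hsinh.div hcosh (coshp y).ne'
  have hfun : T = fun x : ℝ => Real.sinh (x / c) / Real.cosh (x / c) :=
    funext fun x => Real.tanh_eq_sinh_div_cosh _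
  rw [hfun]
  refine h.congr_deriv (Eq.symm ?_)
  have hid := Real.cosh_sq_sub_sinh_sq (y / c)
  have hnum : Real.cosh (y / c) * (1 / c) * Real.cosh (y / c)
      - Real.sinh (y / c) * (Real.sinh (y / c) * (1 / c)) = 1 / c := by
    linear_combination (1 / c) * hid
  rw [hnum]
  simp only [S]
  ring

noncomputable def E (y : ℝ) : ℂ := Complex.exp (2 * Complex.I * (y : ℂ))

noncomputable def m (y : ℝ) : ℂ :=
  1 + (1 / 2) * ((S y : ℝ) : ℂ) ^ 2 + Complex.I * ((c : ℝ) : ℂ) * ((T y : ℝ) : ℂ)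

noncomputable def m1 (y : ℝ) : ℂ :=
  ((-(S y ^ 2 * T y) / c : ℝ) : ℂ) + Complex.I * ((S y ^ 2 : ℝ) : ℂ)

noncomputable def m2 (y : ℝ) : ℂ :=
  (((2 * S y ^ 2 * T y ^ 2 - S y ^ 4) / 2 : ℝ) : ℂ)
    + Complex.I * ((-2 * S y ^ 2 * T y / c : ℝ) : ℂ)

noncomputable def K1 (y : ℝ) : ℂ := E y * (2 * Complex.I * m y + m1 y)

noncomputable def K2 (y : ℝ) : ℂ := E y * (-4 * m y + 4 * Complex.I * m1 y + m2 y)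

lemma kJost_eq' (y : ℝ) : kJost y = E y * m y := rfl

lemma cast_ST (y : ℝ) : ((S y : ℝ) : ℂ) ^ 2 + ((T y : ℝ) : ℂ) ^ 2 = 1 := by
  exact_mod_cast ST y

lemma cast_c_sq : ((c : ℝ) : ℂ) ^ 2 = 2 := by exact_mod_cast c_sq

lemma cast_c_ne : ((c : ℝ) : ℂ) ≠ 0 := Complex.ofReal_ne_zero.mpr c_ne

lemma hE (y : ℝ) : HasDerivAt E (2 * Complex.I * E y) y := by
  have h0 : HasDerivAt (fun x : ℝ => ((x : ℝ) : ℂ)) ((1 : ℝ) : ℂ) y :=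
    (hasDerivAt_id y).ofReal_comp
  have h2 := (h0.const_mul (2 * Complex.I)).cexp
  have hv : Complex.exp (2 * Complex.I * (y : ℂ)) * (2 * Complex.I * ((1 : ℝ) : ℂ))
      = 2 * Complex.I * E y := by
    simp only [E]; push_cast; ring
  exact hv ▸ h2

lemma hm (y : ℝ) : HasDerivAt m (m1 y) y := by
  have hcne' : ((c : ℝ) : ℂ) ≠ 0 := cast_c_ne
  have hS' := (hS y).ofReal_comp
  have hT' := (hT y).ofReal_comp
  have h1 := (hS'.mul hS').const_mul ((1 : ℂ) / 2)
  have h2 := hT'.const_mul (Complex.I * ((c : ℝ) : ℂ))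
  have h := ((hasDerivAt_const y (1 : ℂ)).add h1).add h2
  have hmfun : m = fun x : ℝ =>
      1 + 1 / 2 * (((S x : ℝ) : ℂ) * ((S x : ℝ) : ℂ))
        + Complex.I * ((c : ℝ) : ℂ) * ((T x : ℝ) : ℂ) := by
    funext x; simp only [m]; ring
  rw [hmfun]
  refine h.congr_deriv (Eq.symm ?_)
  simp only [m1]
  push_cast
  field_simp
  ring

lemma hm1 (y : ℝ) : HasDerivAt m1 (m2 y) y := by
  have hu : HasDerivAt (fun x => -(S x ^ 2 * T x) / c)
      ((2 * S y ^ 2 * T y ^ 2 - S y ^ 4) / c ^ 2) y := by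
    have h := (((hS y).pow 2).mul (hT y)).neg.div_const c
    refine h.congr_deriv (Eq.symm ?_)
    push_cast [Pi.pow_apply]
    ring
  have hv : HasDerivAt (fun x => S x ^ 2) (-2 * (S y ^ 2 * T y) / c) y := by
    have h := (hS y).pow 2
    refine h.congr_deriv (Eq.symm ?_)
    push_cast
    ring
  have h := hu.ofReal_comp.add ((hv.ofReal_comp).const_mul Complex.I)
  have hval : m2 y = (((2 * S y ^ 2 * T y ^ 2 - S y ^ 4) / c ^ 2 : ℝ) : ℂ)
      + Complex.I * ((-2 * (S y ^ 2 * T y) / c : ℝ) : ℂ) := by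
    simp only [m2]
    rw [show (2 * S y ^ 2 * T y ^ 2 - S y ^ 4) / 2
        = (2 * S y ^ 2 * T y ^ 2 - S y ^ 4) / c ^ 2 by rw [c_sq]]
    push_cast
    ring
  rw [show m1 = fun x : ℝ => ((-(S x ^ 2 * T x) / c : ℝ) : ℂ)
      + Complex.I * ((S x ^ 2 : ℝ) : ℂ) from rfl, hval]
  exact h

lemma hK (y : ℝ) : HasDerivAt kJost (K1 y) y := by
  have h := (hE y).mul (hm y)
  have hfun : kJost = fun y => E y * m y := funext kJost_eq'
  rw [hfun]
  refine h.congr_deriv (Eq.symm ?_)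
  simp only [K1]
  ring

lemma hK1 (y : ℝ) : HasDerivAt K1 (K2 y) y := by
  have h := (hE y).mul (((hm y).const_mul (2 * Complex.I)).add (hm1 y))
  have hfun : K1 = fun y => E y * (2 * Complex.I * m y + m1 y) := rfl
  rw [hfun]
  refine h.congr_deriv (Eq.symm ?_)
  simp only [K2, Pi.add_apply]
  linear_combination (-4 * E y * m y) * Complex.I_sq

lemma K2_eq (y : ℝ) : K2 y = -((((7 : ℝ) - 3 * T y ^ 2 : ℝ)) : ℂ) * kJost y := by
  have hst := cast_ST y
  have hc2 := cast_c_sq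
  have hcc : ((c : ℝ) : ℂ) * ((c : ℝ) : ℂ)⁻¹ = 1 := mul_inv_cancel₀ cast_c_ne
  rw [kJost_eq']
  simp only [K2, m, m1, m2]
  push_cast
  linear_combination
    (E y * (-(3 + ((S y : ℝ) : ℂ) ^ 2 / 2) - 3 * ((c : ℝ) : ℂ) * ((T y : ℝ) : ℂ) * Complex.I)) * hst
    + (E y * 3 * ((S y : ℝ) : ℂ) ^ 2 * ((T y : ℝ) : ℂ) * Complex.I / ((c : ℝ) : ℂ)) * hc2
    + (E y * (-3) * ((S y : ℝ) : ℂ) ^ 2 * ((T y : ℝ) : ℂ) * ((c : ℝ) : ℂ) * Complex.I) * hcc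
    + (E y * 4 * ((S y : ℝ) : ℂ) ^ 2) * Complex.I_sq

lemma EE (y : ℝ) : E y * (starRingEnd ℂ) (E y) = 1 := by
  simp only [E, ← Complex.exp_conj]
  rw [← Complex.exp_add]
  have h : (starRingEnd ℂ) (2 * Complex.I * (y : ℂ)) = -(2 * Complex.I * (y : ℂ)) := by
    rw [map_mul, map_mul, map_ofNat, Complex.conj_I, Complex.conj_ofReal]
    ring
  rw [h, add_neg_cancel, Complex.exp_zero]

lemma conj_m (y : ℝ) : (starRingEnd ℂ) (m y)
    = 1 + (1 / 2) * ((S y : ℝ) : ℂ) ^ 2 - Complex.I * ((c : ℝ) : ℂ) * ((T y : ℝ) : ℂ) := by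
  simp only [m, map_add, map_mul, map_one, map_pow, map_div₀, Complex.conj_ofReal,
    Complex.conj_I, map_ofNat]
  ring

lemma wronskian (y : ℝ) : (K1 y * (starRingEnd ℂ) (kJost y)).im = 6 := by
  have hcc : ((c : ℝ) : ℂ) * ((c : ℝ) : ℂ)⁻¹ = 1 := mul_inv_cancel₀ cast_c_ne
  have key : K1 y * (starRingEnd ℂ) (kJost y)
      = (E y * (starRingEnd ℂ) (E y)) * ((2 * Complex.I * m y + m1 y) * (starRingEnd ℂ) (m y)) := by
    rw [kJost_eq']
    simp only [K1, map_mul]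
    ring
  have hz : (2 * Complex.I * m y + m1 y) * (starRingEnd ℂ) (m y)
      = ((-(S y ^ 2 * T y) / c * (1 + S y ^ 2 / 2) + S y ^ 2 * c * T y : ℝ) : ℂ)
        + ((2 * ((1 + S y ^ 2 / 2) ^ 2 + c ^ 2 * T y ^ 2)
            + S y ^ 2 * T y ^ 2 + S y ^ 2 + S y ^ 4 / 2 : ℝ) : ℂ) * Complex.I := by
    rw [conj_m]
    simp only [m, m1]
    push_cast
    linear_combination
      ((-2) * ((c : ℝ) : ℂ) ^ 2 * ((T y : ℝ) : ℂ) ^ 2 * Complex.I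
        - ((S y : ℝ) : ℂ) ^ 2 * ((c : ℝ) : ℂ) * ((T y : ℝ) : ℂ)) * Complex.I_sq
      + (Complex.I * ((S y : ℝ) : ℂ) ^ 2 * ((T y : ℝ) : ℂ) ^ 2) * hcc
  rw [key, EE y, one_mul, hz]
  simp only [Complex.add_im, Complex.ofReal_im, Complex.mul_im, Complex.ofReal_re,
    Complex.I_im, Complex.I_re, mul_zero, mul_one, zero_add, add_zero]
  have hst := ST y
  have hc2 := c_sq
  linear_combination (2 * T y ^ 2) * hc2 + (S y ^ 2 + 4) * hst

lemma abs_kJost_le (y : ℝ) : ‖kJost y‖ ≤ 3 := by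
  rw [kJost_eq', norm_mul]
  have h1 : ‖E y‖ = 1 := by
    simp only [E, Complex.norm_exp]
    norm_num [Complex.mul_re, Complex.I_re, Complex.I_im, Complex.ofReal_re, Complex.ofReal_im]
  rw [h1, one_mul]
  have hs0 := S_nonneg y
  have hs1 := S_le_one y
  have hst := ST y
  have hc2 := c_sq
  have hS2 : S y ^ 2 ≤ 1 := by nlinarith
  have ht : T y ^ 2 ≤ 1 := by nlinarith [sq_nonneg (S y)]
  have hmz : m y = ((1 + S y ^ 2 / 2 : ℝ) : ℂ) + ((c * T y : ℝ) : ℂ) * Complex.I := by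
    simp only [m]; push_cast; ring
  have h2T : (c * T y) * (c * T y) = 2 * T y ^ 2 := by
    calc (c * T y) * (c * T y) = c ^ 2 * T y ^ 2 := by ring
    _ = 2 * T y ^ 2 := by rw [hc2]
  have habs : ‖m y‖ ^ 2 ≤ 9 := by
    rw [Complex.sq_norm, hmz, Complex.normSq_apply]
    simp only [Complex.add_re, Complex.add_im, Complex.mul_re, Complex.mul_im, Complex.I_re,
      Complex.I_im, Complex.ofReal_re, Complex.ofReal_im, mul_zero, mul_one, zero_mul,
      zero_add, add_zero, sub_zero, zero_sub]
    nlinarith [h2T, ht, hS2, sq_nonneg (S y)]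
  nlinarith [norm_nonneg (m y), habs]

lemma norm_kJost_le (y : ℝ) : ‖kJost y‖ ≤ 3 := by
  exact abs_kJost_le y

lemma contS : Continuous S := Differentiable.continuous fun y => (hS y).differentiableAt
lemma contT : Continuous T := Differentiable.continuous fun y => (hT y).differentiableAt
lemma contm : Continuous m := Differentiable.continuous fun y => (hm y).differentiableAt
lemma contm1 : Continuous m1 := Differentiable.continuous fun y => (hm1 y).differentiableAt
lemma contK : Continuous kJost := Differentiable.continuous fun y => (hK y).differentiableAt
lemma contK1 : Continuous K1 := Differentiable.continuous fun y => (hK1 y).differentiableAt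

lemma contE : Continuous E :=
  Complex.continuous_exp.comp (continuous_const.mul Complex.continuous_ofReal)

lemma contm2 : Continuous m2 := by
  unfold m2
  apply Continuous.add
  · exact Complex.continuous_ofReal.comp
      ((((continuous_const.mul (contS.pow 2)).mul (contT.pow 2)).sub (contS.pow 4)).div_const 2)
  · exact continuous_const.mul (Complex.continuous_ofReal.comp
      (((continuous_const.mul (contS.pow 2)).mul contT).div_const c))

lemma contK2 : Continuous K2 := by
  unfold K2
  exact contE.mul (((continuous_const.mul contm).add (continuous_const.mul contm1)).add contm2)

end Resolvent


namespace Resolvent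

noncomputable def Af (F : ℝ → ℝ) (y : ℝ) : ℂ :=
  ∫ w in Set.Iic y, (starRingEnd ℂ) (kJost w) * (F w : ℂ)

noncomputable def Bf (F : ℝ → ℝ) (y : ℝ) : ℂ :=
  ∫ w in Set.Ici y, kJost w * (F w : ℂ)

noncomputable def Gf (F : ℝ → ℝ) (y : ℝ) : ℝ :=
  (1 / 12) * (kJost y * Af F y + (starRingEnd ℂ) (kJost y) * Bf F y).im

end Resolvent

open Resolvent in
/-- If F ∈ L¹ ∩ C¹ is real-valued, then
G(y) = (1/12)·Im(k(y)∫_{-∞}^y conj(k)F + conj(k(y))∫_y^∞ kF) is bounded, C², and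
satisfies (-ℒ+6)G = F, i.e. G'' + G - 3tanh²(y/√2)G + 6G = F. -/
theorem resolvent_formula (F : ℝ → ℝ)
    (hF1 : Integrable F) (hFC1 : ContDiff ℝ 1 F) :
    (∃ M : ℝ, ∀ y : ℝ,
      |(1 / 12) * (kJost y * (∫ w in Set.Iic y, (starRingEnd ℂ) (kJost w) * (F w : ℂ))
          + (starRingEnd ℂ) (kJost y) * (∫ w in Set.Ici y, kJost w * (F w : ℂ))).im| ≤ M) ∧
    ContDiff ℝ 2 (fun y : ℝ =>
      (1 / 12) * (kJost y * (∫ w in Set.Iic y, (starRingEnd ℂ) (kJost w) * (F w : ℂ))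
          + (starRingEnd ℂ) (kJost y) * (∫ w in Set.Ici y, kJost w * (F w : ℂ))).im) ∧
    ∀ y : ℝ,
      deriv (deriv (fun x : ℝ =>
          (1 / 12) * (kJost x * (∫ w in Set.Iic x, (starRingEnd ℂ) (kJost w) * (F w : ℂ))
              + (starRingEnd ℂ) (kJost x) * (∫ w in Set.Ici x, kJost w * (F w : ℂ))).im)) y
        + ((1 / 12) * (kJost y * (∫ w in Set.Iic y, (starRingEnd ℂ) (kJost w) * (F w : ℂ))
              + (starRingEnd ℂ) (kJost y) * (∫ w in Set.Ici y, kJost w * (F w : ℂ))).im)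
        - 3 * (Real.tanh (y / Real.sqrt 2)) ^ 2
            * ((1 / 12) * (kJost y * (∫ w in Set.Iic y, (starRingEnd ℂ) (kJost w) * (F w : ℂ))
                + (starRingEnd ℂ) (kJost y) * (∫ w in Set.Ici y, kJost w * (F w : ℂ))).im)
        + 6 * ((1 / 12) * (kJost y * (∫ w in Set.Iic y, (starRingEnd ℂ) (kJost w) * (F w : ℂ))
                + (starRingEnd ℂ) (kJost y) * (∫ w in Set.Ici y, kJost w * (F w : ℂ))).im)
      = F y := by
  have hFc : Continuous F := hFC1.continuous
  have hgInt : Integrable (fun w : ℝ => (starRingEnd ℂ) (kJost w) * (F w : ℂ)) := by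
    refine (hF1.ofReal (𝕜 := ℂ)).bdd_mul (c := 3) ?_ (Filter.Eventually.of_forall ?_)
    · exact (Complex.continuous_conj.comp contK).aestronglyMeasurable
    · intro x; rw [RCLike.norm_conj]; exact norm_kJost_le x
  have hhInt : Integrable (fun w : ℝ => kJost w * (F w : ℂ)) :=
    (hF1.ofReal (𝕜 := ℂ)).bdd_mul contK.aestronglyMeasurable (Filter.Eventually.of_forall norm_kJost_le)
  have hgc : Continuous (fun w : ℝ => (starRingEnd ℂ) (kJost w) * (F w : ℂ)) :=
    (Complex.continuous_conj.comp contK).mul (Complex.continuous_ofReal.comp hFc)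
  have hhc : Continuous (fun w : ℝ => kJost w * (F w : ℂ)) :=
    contK.mul (Complex.continuous_ofReal.comp hFc)
  -- derivative of the two integrals
  have hA : ∀ y : ℝ, HasDerivAt (Af F) ((starRingEnd ℂ) (kJost y) * (F y : ℂ)) y := by
    intro y
    have hrep : Af F = fun t : ℝ =>
        Af F 0 + ∫ w in (0:ℝ)..t, (starRingEnd ℂ) (kJost w) * (F w : ℂ) := by
      funext t
      have h := intervalIntegral.integral_Iic_sub_Iic
        (hgInt.integrableOn (s := Set.Iic (0:ℝ))) (hgInt.integrableOn (s := Set.Iic t))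
      simp only [Af]
      rw [← h]; ring
    rw [hrep]
    exact ((hgc.integral_hasStrictDerivAt 0 y).hasDerivAt).const_add _
  have hIic : ∀ y : ℝ, HasDerivAt (fun t : ℝ => ∫ w in Set.Iic t, kJost w * (F w : ℂ))
      (kJost y * (F y : ℂ)) y := by
    intro y
    have hrep : (fun t : ℝ => ∫ w in Set.Iic t, kJost w * (F w : ℂ)) = fun t : ℝ =>
        (∫ w in Set.Iic (0:ℝ), kJost w * (F w : ℂ)) + ∫ w in (0:ℝ)..t, kJost w * (F w : ℂ) := by
      funext t
      have h := intervalIntegral.integral_Iic_sub_Iic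
        (hhInt.integrableOn (s := Set.Iic (0:ℝ))) (hhInt.integrableOn (s := Set.Iic t))
      rw [← h]; ring
    rw [hrep]
    exact ((hhc.integral_hasStrictDerivAt 0 y).hasDerivAt).const_add _
  have hB : ∀ y : ℝ, HasDerivAt (Bf F) (-(kJost y * (F y : ℂ))) y := by
    intro y
    have hrep : Bf F = fun t : ℝ =>
        (∫ w : ℝ, kJost w * (F w : ℂ)) - ∫ w in Set.Iic t, kJost w * (F w : ℂ) := by
      funext t
      have h1 := intervalIntegral.integral_Iio_add_Ici
        (hhInt.integrableOn (s := Set.Iio t)) (hhInt.integrableOn (s := Set.Ici t))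
      have h2 : (∫ w in Set.Iio t, kJost w * (F w : ℂ))
          = ∫ w in Set.Iic t, kJost w * (F w : ℂ) :=
        MeasureTheory.setIntegral_congr_set MeasureTheory.Iio_ae_eq_Iic
      simp only [Bf]
      rw [← h1, h2]; ring
    rw [hrep]
    exact (hIic y).const_sub _
  have hKst : ∀ y : ℝ, HasDerivAt (fun t : ℝ => (starRingEnd ℂ) (kJost t))
      ((starRingEnd ℂ) (K1 y)) y := by
    intro y
    simpa only [Complex.star_def] using (hK y).star
  have hK1st : ∀ y : ℝ, HasDerivAt (fun t : ℝ => (starRingEnd ℂ) (K1 t))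
      ((starRingEnd ℂ) (K2 y)) y := by
    intro y
    simpa only [Complex.star_def] using (hK1 y).star
  have hH : ∀ y : ℝ, HasDerivAt
      (fun t : ℝ => kJost t * Af F t + (starRingEnd ℂ) (kJost t) * Bf F t)
      (K1 y * Af F y + (starRingEnd ℂ) (K1 y) * Bf F y) y := by
    intro y
    have h := ((hK y).mul (hA y)).add ((hKst y).mul (hB y))
    refine h.congr_deriv (Eq.symm ?_)
    ring
  have hH1 : ∀ y : ℝ, HasDerivAt
      (fun t : ℝ => K1 t * Af F t + (starRingEnd ℂ) (K1 t) * Bf F t)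
      (K2 y * Af F y + (starRingEnd ℂ) (K2 y) * Bf F y
        + (K1 y * (starRingEnd ℂ) (kJost y) - (starRingEnd ℂ) (K1 y) * kJost y) * (F y : ℂ)) y := by
    intro y
    have h := ((hK1 y).mul (hA y)).add ((hK1st y).mul (hB y))
    refine h.congr_deriv (Eq.symm ?_)
    ring
  have hG1 : ∀ y : ℝ, HasDerivAt (Gf F)
      ((1 / 12) * (K1 y * Af F y + (starRingEnd ℂ) (K1 y) * Bf F y).im) y := by
    intro y
    have h := (Complex.imCLM.hasFDerivAt.comp_hasDerivAt y (hH y)).const_mul (1/12 : ℝ)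
    simp only [Complex.imCLM_apply, Function.comp_apply] at h
    exact h
  have hderiv1 : deriv (Gf F)
      = fun y : ℝ => (1 / 12) * (K1 y * Af F y + (starRingEnd ℂ) (K1 y) * Bf F y).im :=
    funext fun y => (hG1 y).deriv
  have hG2 : ∀ y : ℝ, HasDerivAt
      (fun y : ℝ => (1 / 12) * (K1 y * Af F y + (starRingEnd ℂ) (K1 y) * Bf F y).im)
      ((1 / 12) * (K2 y * Af F y + (starRingEnd ℂ) (K2 y) * Bf F y
        + (K1 y * (starRingEnd ℂ) (kJost y) - (starRingEnd ℂ) (K1 y) * kJost y) * (F y : ℂ)).im)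
      y := by
    intro y
    have h := (Complex.imCLM.hasFDerivAt.comp_hasDerivAt y (hH1 y)).const_mul (1/12 : ℝ)
    simpa only [Complex.imCLM_apply, Function.comp_apply] using h
  have hFabs : (0:ℝ) ≤ ∫ w, |F w| := integral_nonneg fun w => abs_nonneg _
  have hAb : ∀ y : ℝ, ‖Af F y‖ ≤ 3 * ∫ w, |F w| := by
    intro y
    have h1 : ‖Af F y‖ ≤ ∫ w in Set.Iic y, ‖(starRingEnd ℂ) (kJost w) * (F w : ℂ)‖ :=
      norm_integral_le_integral_norm _
    have h2 : (∫ w in Set.Iic y, ‖(starRingEnd ℂ) (kJost w) * (F w : ℂ)‖)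
        ≤ ∫ w in Set.Iic y, 3 * |F w| := by
      apply integral_mono_of_nonneg
      · exact Filter.Eventually.of_forall fun w => norm_nonneg _
      · exact ((hF1.abs.const_mul 3).integrableOn)
      · refine Filter.Eventually.of_forall fun w => ?_
        show ‖(starRingEnd ℂ) (kJost w) * (F w : ℂ)‖ ≤ 3 * |F w|
        rw [norm_mul, RCLike.norm_conj, Complex.norm_real, Real.norm_eq_abs]
        exact mul_le_mul_of_nonneg_right (norm_kJost_le w) (abs_nonneg _)
    have h3 : (∫ w in Set.Iic y, 3 * |F w|) ≤ ∫ w, 3 * |F w| :=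
      setIntegral_le_integral (hF1.abs.const_mul 3)
        (Filter.Eventually.of_forall fun w => by positivity)
    have h4 : (∫ w, 3 * |F w|) = 3 * ∫ w, |F w| := integral_const_mul 3 _
    linarith
  have hBb : ∀ y : ℝ, ‖Bf F y‖ ≤ 3 * ∫ w, |F w| := by
    intro y
    have h1 : ‖Bf F y‖ ≤ ∫ w in Set.Ici y, ‖kJost w * (F w : ℂ)‖ :=
      norm_integral_le_integral_norm _
    have h2 : (∫ w in Set.Ici y, ‖kJost w * (F w : ℂ)‖)
        ≤ ∫ w in Set.Ici y, 3 * |F w| := by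
      apply integral_mono_of_nonneg
      · exact Filter.Eventually.of_forall fun w => norm_nonneg _
      · exact ((hF1.abs.const_mul 3).integrableOn)
      · refine Filter.Eventually.of_forall fun w => ?_
        show ‖kJost w * (F w : ℂ)‖ ≤ 3 * |F w|
        rw [norm_mul, Complex.norm_real, Real.norm_eq_abs]
        exact mul_le_mul_of_nonneg_right (norm_kJost_le w) (abs_nonneg _)
    have h3 : (∫ w in Set.Ici y, 3 * |F w|) ≤ ∫ w, 3 * |F w| :=
      setIntegral_le_integral (hF1.abs.const_mul 3)
        (Filter.Eventually.of_forall fun w => by positivity)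
    have h4 : (∫ w, 3 * |F w|) = 3 * ∫ w, |F w| := integral_const_mul 3 _
    linarith
  have hGb : ∀ y : ℝ, |Gf F y| ≤ (3/2) * ∫ w, |F w| := by
    intro y
    have him : |(kJost y * Af F y + (starRingEnd ℂ) (kJost y) * Bf F y).im|
        ≤ ‖kJost y * Af F y + (starRingEnd ℂ) (kJost y) * Bf F y‖ := by
      exact Complex.abs_im_le_norm _
    have hn : ‖kJost y * Af F y + (starRingEnd ℂ) (kJost y) * Bf F y‖
        ≤ ‖kJost y‖ * ‖Af F y‖ + ‖kJost y‖ * ‖Bf F y‖ := by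
      refine (norm_add_le _ _).trans ?_
      rw [norm_mul, norm_mul, RCLike.norm_conj]
    have hky := norm_kJost_le y
    have h5 : ‖kJost y‖ * ‖Af F y‖ ≤ 3 * (3 * ∫ w, |F w|) :=
      mul_le_mul hky (hAb y) (norm_nonneg _) (by norm_num)
    have h6 : ‖kJost y‖ * ‖Bf F y‖ ≤ 3 * (3 * ∫ w, |F w|) :=
      mul_le_mul hky (hBb y) (norm_nonneg _) (by norm_num)
    have : |Gf F y| = (1/12) * |(kJost y * Af F y + (starRingEnd ℂ) (kJost y) * Bf F y).im| := by
      simp only [Gf]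
      rw [abs_mul]
      norm_num
    rw [this]
    linarith
  have hcontA : Continuous (Af F) :=
    Differentiable.continuous fun y => (hA y).differentiableAt
  have hcontB : Continuous (Bf F) :=
    Differentiable.continuous fun y => (hB y).differentiableAt
  have hcont2 : Continuous (fun y : ℝ => (1 / 12) * (K2 y * Af F y + (starRingEnd ℂ) (K2 y) * Bf F y
        + (K1 y * (starRingEnd ℂ) (kJost y) - (starRingEnd ℂ) (K1 y) * kJost y) * (F y : ℂ)).im) := by
    apply continuous_const.mul
    apply Complex.continuous_im.comp
    exact ((contK2.mul hcontA).add ((Complex.continuous_conj.comp contK2).mul hcontB)).add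
      ((((contK1.mul (Complex.continuous_conj.comp contK)).sub
        ((Complex.continuous_conj.comp contK1).mul contK)).mul (Complex.continuous_ofReal.comp hFc)))
  have hCD : ContDiff ℝ 2 (Gf F) := by
    rw [show (2 : WithTop ℕ∞) = 1 + 1 from one_add_one_eq_two.symm, contDiff_succ_iff_deriv]
    refine ⟨fun y => (hG1 y).differentiableAt, by simp, ?_⟩
    rw [hderiv1, show (1 : WithTop ℕ∞) = 0 + 1 from (zero_add 1).symm, contDiff_succ_iff_deriv]
    refine ⟨fun y => (hG2 y).differentiableAt, by simp, ?_⟩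
    have : deriv (fun y : ℝ => (1 / 12) * (K1 y * Af F y + (starRingEnd ℂ) (K1 y) * Bf F y).im)
        = fun y : ℝ => (1 / 12) * (K2 y * Af F y + (starRingEnd ℂ) (K2 y) * Bf F y
          + (K1 y * (starRingEnd ℂ) (kJost y) - (starRingEnd ℂ) (K1 y) * kJost y) * (F y : ℂ)).im :=
      funext fun y => (hG2 y).deriv
    rw [this]
    exact contDiff_zero.mpr hcont2
  refine ⟨⟨(3/2) * ∫ w, |F w|, hGb⟩, hCD, ?_⟩
  intro y
  show deriv (deriv (Gf F)) y + Gf F y - 3 * Real.tanh (y / Real.sqrt 2) ^ 2 * Gf F y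
      + 6 * Gf F y = F y
  have h12 : K1 y * (starRingEnd ℂ) (kJost y) - (starRingEnd ℂ) (K1 y) * kJost y
      = 12 * Complex.I := by
    have hc : (starRingEnd ℂ) (K1 y) * kJost y
        = (starRingEnd ℂ) (K1 y * (starRingEnd ℂ) (kJost y)) := by
      rw [map_mul, Complex.conj_conj]
    rw [hc, Complex.sub_conj, wronskian]
    norm_num
  have hK2c : (starRingEnd ℂ) (K2 y)
      = -((((7 : ℝ) - 3 * T y ^ 2 : ℝ)) : ℂ) * (starRingEnd ℂ) (kJost y) := by
    rw [K2_eq]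
    rw [map_mul, map_neg, Complex.conj_ofReal]
  have hT' : Real.tanh (y / Real.sqrt 2) = T y := rfl
  have e2 : (K2 y * Af F y + (starRingEnd ℂ) (K2 y) * Bf F y
      + (K1 y * (starRingEnd ℂ) (kJost y) - (starRingEnd ℂ) (K1 y) * kJost y) * (F y : ℂ)).im
      = -(7 - 3 * T y ^ 2) * (kJost y * Af F y + (starRingEnd ℂ) (kJost y) * Bf F y).im
        + 12 * F y := by
    rw [h12, hK2c, K2_eq]
    have hz : -((((7 : ℝ) - 3 * T y ^ 2 : ℝ)) : ℂ) * kJost y * Af F y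
        + -((((7 : ℝ) - 3 * T y ^ 2 : ℝ)) : ℂ) * (starRingEnd ℂ) (kJost y) * Bf F y
        + 12 * Complex.I * (F y : ℂ)
        = ((-(7 - 3 * T y ^ 2) : ℝ) : ℂ)
            * (kJost y * Af F y + (starRingEnd ℂ) (kJost y) * Bf F y)
          + ((12 * F y : ℝ) : ℂ) * Complex.I := by
      push_cast
      ring
    rw [hz]
    rw [Complex.add_im, Complex.im_ofReal_mul, Complex.mul_I_im, Complex.ofReal_re]
  have e1 : deriv (deriv (Gf F)) y
      = (1 / 12) * (K2 y * Af F y + (starRingEnd ℂ) (K2 y) * Bf F y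
        + (K1 y * (starRingEnd ℂ) (kJost y) - (starRingEnd ℂ) (K1 y) * kJost y) * (F y : ℂ)).im := by
    rw [hderiv1]
    exact (hG2 y).deriv
  rw [e1, e2, hT']
  simp only [Gf]
  ring
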